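/- Let n ≥ 2 and H ≥ 2. Consider trinomials X^n + aX − b with H/2 ≤ a ≤ H, 1 ≤ b ≤ H/(3n), a ≡ 0 (mod 2), b ≡ 2 (mod 4). All such trinomials are irreducible over ℚ (by Eisenstein at 2), and distinct pairs (a,b) in this range give distinct values of (n-1)^{n-1}a^n + n^n b^{n-1}; hence the number of distinct polynomial discriminants of irreducible monic degree-n polynomials with coefficients of absolute value at most H is ≫ H². -/

import Mathlib

open Polynomial

/-- The discriminant of `f`, computed in the algebraic closure via
`(-1)^(n(n-1)/2) ∏_{roots r of f} f'(r)` (valid for monic `f`). -/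
noncomputable def discAC {K : Type*} [Field K] (f : Polynomial K) : AlgebraicClosure K :=
  (-1) ^ (f.natDegree * (f.natDegree - 1) / 2) *
    (((f.map (algebraMap K (AlgebraicClosure K))).roots).map
      (fun r => ((Polynomial.derivative f).map (algebraMap K (AlgebraicClosure K))).eval r)).prod

-- The discriminant of `f` as an element of the base field.
open Classical in
noncomputable def polyDisc {K : Type*} [Field K] (f : Polynomial K) : K :=
  if h : ∃ d : K, algebraMap K (AlgebraicClosure K) d = discAC f then h.choose else 0

/-- Trinomials `X^n + aX − b` with `H/2 ≤ a ≤ H`, `1 ≤ b ≤ H/(3n)`, `a ≡ 0 (mod 2)`,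
`b ≡ 2 (mod 4)` are irreducible over `ℚ`; for `H` large enough distinct pairs `(a,b)` in this
range give distinct values of `(n-1)^(n-1)a^n + n^n b^(n-1)`; hence the number of distinct
polynomial discriminants of monic degree-`n` integer polynomials, irreducible over `ℚ`, with
coefficients of absolute value at most `H`, is `≫ H²`. -/
lemma trin_map {R S : Type*} [CommRing R] [CommRing S] (φ : R →+* S) (a b : R) (n : ℕ) :
    (X ^ n + C a * X - C b : R[X]).map φ = X ^ n + C (φ a) * X - C (φ b) := by
  simp [Polynomial.map_sub, Polynomial.map_add, Polynomial.map_pow]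

lemma trin_deg_lt {R : Type*} [CommRing R] [Nontrivial R] (a b : R) {n : ℕ} (hn : 2 ≤ n) :
    (C a * X - C b : R[X]).degree < (X ^ n : R[X]).degree := by
  rw [degree_X_pow]
  have : (C a * X - C b : R[X]) = C a * X + C (-b) := by rw [map_neg]; ring
  rw [this]
  refine lt_of_le_of_lt (degree_linear_le) ?_
  exact_mod_cast by omega

lemma trin_monic {R : Type*} [CommRing R] [Nontrivial R] (a b : R) {n : ℕ} (hn : 2 ≤ n) :
    (X ^ n + C a * X - C b : R[X]).Monic := by
  have : (X ^ n + C a * X - C b : R[X]) = X ^ n + (C a * X - C b) := by ring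
  rw [this]
  exact monic_X_pow_add ((trin_deg_lt a b hn).trans_le (by rw [degree_X_pow]))

lemma trin_natDegree {R : Type*} [CommRing R] [Nontrivial R] (a b : R) {n : ℕ} (hn : 2 ≤ n) :
    (X ^ n + C a * X - C b : R[X]).natDegree = n := by
  have : (X ^ n + C a * X - C b : R[X]) = X ^ n + (C a * X - C b) := by ring
  rw [this]
  have := degree_add_eq_left_of_degree_lt (trin_deg_lt a b hn)
  rw [degree_X_pow] at this
  exact natDegree_eq_of_degree_eq_some this

lemma trin_deriv (a b : ℚ) {n : ℕ} (hn : 2 ≤ n) :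
    derivative (X ^ n + C a * X - C b : ℚ[X]) = C (n : ℚ) * X ^ (n - 1) + C a := by
  have h : derivative (X ^ n : ℚ[X]) = C (n : ℚ) * X ^ (n - 1) := by
    rw [derivative_X_pow]
  simp [derivative_add, derivative_sub, h]

lemma trin_polyDisc (a b : ℚ) (ha : a ≠ 0) (hb : b ≠ 0) {n : ℕ} (hn : 2 ≤ n) :
    polyDisc (X ^ n + C a * X - C b : ℚ[X]) =
      (-1 : ℚ) ^ (n * (n - 1) / 2 + (n + 1)) *
        (((n - 1 : ℕ) : ℚ) ^ (n - 1) * a ^ n + (n : ℚ) ^ n * b ^ (n - 1)) := by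
  set K := AlgebraicClosure ℚ
  set φ : ℚ →+* K := algebraMap ℚ K with hφ
  set f : ℚ[X] := X ^ n + C a * X - C b with hfdef
  have hmon : f.Monic := trin_monic a b hn
  have hdeg : f.natDegree = n := trin_natDegree a b hn
  set F : K[X] := f.map φ with hF
  have hFeq : F = X ^ n + C (φ a) * X - C (φ b) := trin_map φ a b n
  have hFmon : F.Monic := hmon.map φ
  have hFdeg : F.natDegree = n := by rw [hFeq]; exact trin_natDegree _ _ hn
  have hsplits : F.Splits := IsAlgClosed.splits F
  set M : Multiset K := F.roots with hM
  have hcard : Multiset.card M = n := by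
    rw [hM, ← hFdeg]; exact (splits_iff_card_roots).mp hsplits
  have hFne : F ≠ 0 := hFmon.ne_zero
  have hroot : ∀ r ∈ M, r ^ n + φ a * r - φ b = 0 := by
    intro r hr
    have := isRoot_of_mem_roots hr
    rw [hFeq] at this
    simpa [IsRoot] using this
  -- the multiset of derivative values
  have hderivmap : ((derivative f).map φ) = C ((n : K)) * X ^ (n - 1) + C (φ a) := by
    rw [trin_deriv a b hn]
    simp [Polynomial.map_add, Polynomial.map_pow]
    exact (map_natCast C n).symm
  have hD : (M.map (fun r => ((derivative f).map φ).eval r)) =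
      M.map (fun r => (n : K) * r ^ (n - 1) + φ a) := by
    apply Multiset.map_congr rfl
    intro r _
    rw [hderivmap]
    simp
  -- F as a product over roots
  have hFprod : F = (M.map (fun r => X - C r)).prod := by
    conv_lhs => rw [hsplits.eq_prod_roots_of_monic hFmon]
  have hevalprod : ∀ x : K, F.eval x = (M.map (fun r => x - r)).prod := by
    intro x
    conv_lhs => rw [hFprod]
    rw [eval_multiset_prod, Multiset.map_map]
    simp
  -- product of roots
  have hMprod : M.prod = (-1 : K) ^ (n + 1) * φ b := by
    have h0 : F.eval 0 = (M.map (fun r => 0 - r)).prod := hevalprod 0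
    have h0' : F.eval 0 = - φ b := by rw [hFeq]; simp [show n ≠ 0 by omega]
    have h2 : (M.map (fun r => 0 - r)).prod = (-1 : K) ^ n * M.prod := by
      have : (M.map (fun r => 0 - r)) = M.map (fun r => (-1) * r) := by
        apply Multiset.map_congr rfl; intro r _; ring
      rw [this]
      rw [Multiset.prod_map_mul]
      simp [hcard, Multiset.map_const']
    have := h0'.symm.trans (h0.trans h2)
    have hsign : ((-1 : K) ^ n) * ((-1 : K) ^ n) = 1 := by
      rw [← pow_add]; exact (neg_one_pow_eq_one_iff_even (by norm_num)).mpr ⟨n, rfl⟩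
    calc M.prod = ((-1:K)^n * (-1:K)^n) * M.prod := by rw [hsign, one_mul]
      _ = (-1:K)^n * (- φ b) := by rw [mul_assoc, ← h2, ← h0, h0']
      _ = (-1 : K) ^ (n + 1) * φ b := by rw [pow_succ]; ring
  -- step B: multiply by the roots
  set P : K := (M.map (fun r => (n : K) * r ^ (n - 1) + φ a)).prod with hP
  set d : K := ((n : K) - 1) * φ a with hd
  have hnK : ((n : K) - 1) = (((n - 1 : ℕ) : K)) := by
    push_cast [Nat.cast_sub (by omega : 1 ≤ n)]; ring
  have hdne : d ≠ 0 := by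
    rw [hd]
    apply mul_ne_zero
    · rw [hnK]
      exact_mod_cast Nat.cast_ne_zero.mpr (by omega : n - 1 ≠ 0)
    · exact (map_ne_zero φ).mpr ha
  set x₀ : K := ((n : K) * φ b) / d with hx₀def
  have hdx : d * x₀ = (n : K) * φ b := by
    rw [hx₀def, mul_div_cancel₀ _ hdne]
  have hPM : P * M.prod = d ^ n * F.eval x₀ := by
    have s1 : P * M.prod = (M.map (fun r => ((n : K) * r ^ (n - 1) + φ a) * r)).prod := by
      rw [Multiset.prod_map_mul, hP, Multiset.map_id']
    have s2 : (M.map (fun r => ((n : K) * r ^ (n - 1) + φ a) * r)) =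
        M.map (fun r => d * (x₀ - r)) := by
      apply Multiset.map_congr rfl
      intro r hr
      have hr' : r ^ n = φ b - φ a * r := by have := hroot r hr; linear_combination this
      have hpow : r ^ (n - 1) * r = r ^ n := by
        rw [← pow_succ]; congr 1; omega
      calc ((n : K) * r ^ (n - 1) + φ a) * r = (n : K) * (r ^ (n - 1) * r) + φ a * r := by ring
        _ = (n : K) * r ^ n + φ a * r := by rw [hpow]
        _ = (n : K) * φ b - ((n : K) - 1) * (φ a * r) := by rw [hr']; ring
        _ = d * (x₀ - r) := by rw [mul_sub, hdx, hd]; ring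
    have s3 : (M.map (fun r => d * (x₀ - r))).prod = d ^ n * (M.map (fun r => x₀ - r)).prod := by
      rw [show (fun r : K => d * (x₀ - r)) = (fun r : K => (fun _ => d) r * (fun r => x₀ - r) r) from rfl,
        Multiset.prod_map_mul, Multiset.map_const', Multiset.prod_replicate, hcard]
    rw [s1, s2, s3, hevalprod x₀]
  -- step D: evaluate in ℚ
  have hq1 : ((n : ℚ) - 1) ≠ 0 := by
    have : ((n : ℚ) - 1) = ((n - 1 : ℕ) : ℚ) := by
      push_cast [Nat.cast_sub (by omega : 1 ≤ n)]; ring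
    rw [this]
    exact_mod_cast Nat.cast_ne_zero.mpr (by omega : n - 1 ≠ 0)
  set q : ℚ := ((n : ℚ) * b) / (((n : ℚ) - 1) * a) with hqdef
  have hdφ : d = φ (((n : ℚ) - 1) * a) := by
    rw [hd]; push_cast; simp [map_mul, map_sub]
  have hx₀q : x₀ = φ q := by
    rw [hx₀def, hqdef, hdφ, map_div₀, map_mul]
    push_cast
    simp
  have hqq : (((n : ℚ) - 1) * a) * q = (n : ℚ) * b := by
    rw [hqdef]
    field_simp
  have heval : F.eval x₀ = φ (f.eval q) := by
    rw [hx₀q, hF, eval_map, eval₂_at_apply]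
  have hfq : f.eval q = q ^ n + a * q - b := by rw [hfdef]; simp
  have hrat : (((n : ℚ) - 1) * a) ^ n * f.eval q =
      b * (((n - 1 : ℕ) : ℚ) ^ (n - 1) * a ^ n + (n : ℚ) ^ n * b ^ (n - 1)) := by
    obtain ⟨m, rfl⟩ : ∃ m, n = m + 1 := ⟨n - 1, by omega⟩
    rw [hfq]
    simp only [Nat.add_sub_cancel]
    push_cast
    have e1 : (((m : ℚ) + 1 - 1) * a) ^ (m + 1) * q ^ (m + 1) = (((m : ℚ) + 1) * b) ^ (m + 1) := by
      rw [← mul_pow]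
      congr 1
      have := hqq
      push_cast at this
      linear_combination this
    have e2 := hqq
    push_cast at e2
    have e3 : (((m : ℚ) + 1) * b) ^ m = ((m : ℚ) + 1) ^ m * b ^ m := mul_pow _ _ _
    linear_combination e1 + ((((m : ℚ) + 1 - 1) * a) ^ m * a) * e2 + (((m : ℚ) + 1) * b) * e3
  -- step E: combine
  have hbD : P * M.prod = φ (b * (((n - 1 : ℕ) : ℚ) ^ (n - 1) * a ^ n + (n : ℚ) ^ n * b ^ (n - 1))) := by
    rw [hPM, heval, hdφ, ← map_pow, ← map_mul, hrat]
  have hsign2 : ((-1 : K) ^ (n + 1)) * ((-1 : K) ^ (n + 1)) = 1 := by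
    rw [← pow_add]
    exact (neg_one_pow_eq_one_iff_even (by norm_num)).mpr ⟨n + 1, rfl⟩
  have hPval : P = (-1 : K) ^ (n + 1) *
      φ (((n - 1 : ℕ) : ℚ) ^ (n - 1) * a ^ n + (n : ℚ) ^ n * b ^ (n - 1)) := by
    have hbne : (-1 : K) ^ (n + 1) * φ b ≠ 0 := by
      apply mul_ne_zero
      · exact pow_ne_zero _ (by norm_num)
      · exact (map_ne_zero φ).mpr hb
    apply mul_right_cancel₀ hbne
    rw [← hMprod, hbD, hMprod, map_mul]
    linear_combination
      (-(φ (((n - 1 : ℕ) : ℚ) ^ (n - 1) * a ^ n + (n : ℚ) ^ n * b ^ (n - 1)) * φ b)) * hsign2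
  -- final: compute discAC and polyDisc
  set Dval : ℚ := (-1 : ℚ) ^ (n * (n - 1) / 2 + (n + 1)) *
    (((n - 1 : ℕ) : ℚ) ^ (n - 1) * a ^ n + (n : ℚ) ^ n * b ^ (n - 1)) with hDval
  have hw : φ Dval = discAC f := by
    rw [discAC, hdeg, hDval]
    have : ((f.map (algebraMap ℚ K)).roots).map
        (fun r => ((Polynomial.derivative f).map (algebraMap ℚ K)).eval r) = M.map (fun r => (n : K) * r ^ (n - 1) + φ a) := by
      rw [← hφ, ← hF, ← hM]
      exact hD
    erw [this, ← hP, hPval]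
    rw [map_mul, map_pow, map_neg, map_one, pow_add]
    ring
  have hex : ∃ dd : ℚ, algebraMap ℚ (AlgebraicClosure ℚ) dd = discAC f := ⟨Dval, hw⟩
  rw [polyDisc]
  split_ifs with h
  · exact (algebraMap ℚ K).injective (h.choose_spec.trans hw.symm)
  · exact absurd hex h
lemma trin_irred_int (a b : ℤ) {n : ℕ} (hn : 2 ≤ n) (ha : a % 2 = 0) (hb : b % 4 = 2) :
    Irreducible (X ^ n + C a * X - C b : ℤ[X]) := by
  set f : ℤ[X] := X ^ n + C a * X - C b with hf
  have hcoeff : ∀ i, i < n → f.coeff i ∈ Ideal.span ({2} : Set ℤ) := by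
    intro i hi
    rw [Ideal.mem_span_singleton, hf]
    simp only [coeff_sub, coeff_add, coeff_X_pow, coeff_C_mul, coeff_X, coeff_C]
    rcases Nat.lt_or_ge i 2 with h | h
    · interval_cases i <;> simp [hi.ne, show ¬ n = 0 by omega, show ¬ n = 1 by omega] <;> omega
    · simp [hi.ne, show ¬ 1 = i by omega, show ¬ i = 0 by omega]
  refine irreducible_of_eisenstein_criterion (Ideal.span_singleton_prime (by norm_num) |>.mpr Int.prime_two) ?_ ?_ ?_ ?_ ((trin_monic a b hn).isPrimitive)
  · rw [(trin_monic a b hn).leadingCoeff, Ideal.mem_span_singleton]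
    norm_num
  · intro i hi
    rw [degree_eq_natDegree (trin_monic a b hn).ne_zero, trin_natDegree a b hn] at hi
    exact hcoeff i (by exact_mod_cast hi)
  · rw [degree_eq_natDegree (trin_monic a b hn).ne_zero, trin_natDegree a b hn]
    exact_mod_cast by omega
  · rw [Ideal.span_singleton_pow, Ideal.mem_span_singleton, hf]
    simp only [coeff_sub, coeff_add, coeff_X_pow, coeff_C_mul, coeff_X, coeff_C]
    norm_num [show ¬ 0 = n by omega]
    omega

lemma trin_irred_rat (a b : ℤ) {n : ℕ} (hn : 2 ≤ n) (ha : a % 2 = 0) (hb : b % 4 = 2) :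
    Irreducible (X ^ n + C (a : ℚ) * X - C (b : ℚ) : ℚ[X]) := by
  have h := (IsPrimitive.Int.irreducible_iff_irreducible_map_cast
    ((trin_monic a b hn).isPrimitive)).mp (trin_irred_int a b hn ha hb)
  rwa [trin_map] at h

lemma pow_lin_lb : ∀ (m : ℕ) (x y : ℤ), 0 ≤ y → y ≤ x →
    (m + 1 : ℤ) * y ^ m * (x - y) ≤ x ^ (m + 1) - y ^ (m + 1) := by
  intro m
  induction m with
  | zero => intro x y hy hxy; simp
  | succ m ih =>
    intro x y hy hxy
    have h1 := ih x y hy hxy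
    have h2 : (0:ℤ) ≤ (m + 1 : ℤ) * y ^ m * (x - y) :=
      mul_nonneg (mul_nonneg (by positivity) (pow_nonneg hy m)) (sub_nonneg.mpr hxy)
    have h3 : y * ((m + 1 : ℤ) * y ^ m * (x - y)) ≤ x * (x ^ (m+1) - y ^ (m+1)) := by
      calc y * ((m + 1 : ℤ) * y ^ m * (x - y)) ≤ x * ((m + 1 : ℤ) * y ^ m * (x - y)) :=
            mul_le_mul_of_nonneg_right hxy h2
        _ ≤ x * (x ^ (m+1) - y ^ (m+1)) :=
            mul_le_mul_of_nonneg_left h1 (hy.trans hxy)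
    have hyp : (0:ℤ) ≤ y ^ (m+1) := pow_nonneg hy _
    simp only [pow_succ] at h3 ⊢
    push_cast
    nlinarith [h3]

set_option maxHeartbeats 1000000 in
lemma no_gt (n : ℕ) (hn : 2 ≤ n) (H : ℕ) (hH : 2 ≤ H) (a₁ b₁ a₂ b₂ : ℤ)
    (h1 : (H : ℤ) ≤ 2 * a₁) (h2 : a₁ ≤ (H : ℤ)) (h3 : 1 ≤ b₁) (h4 : 3 * (n : ℤ) * b₁ ≤ (H : ℤ))
    (g1 : (H : ℤ) ≤ 2 * a₂) (g2 : a₂ ≤ (H : ℤ)) (g3 : 1 ≤ b₂) (g4 : 3 * (n : ℤ) * b₂ ≤ (H : ℤ))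
    (hlt : a₂ < a₁)
    (heq : ((n - 1 : ℕ) : ℤ) ^ (n - 1) * a₁ ^ n + (n : ℤ) ^ n * b₁ ^ (n - 1) =
      ((n - 1 : ℕ) : ℤ) ^ (n - 1) * a₂ ^ n + (n : ℤ) ^ n * b₂ ^ (n - 1)) : False := by
  obtain ⟨m, rfl⟩ : ∃ m, n = m + 1 := ⟨n - 1, by omega⟩
  have hm : 1 ≤ m := by omega
  set K : ℤ := ((m + 1 - 1 : ℕ) : ℤ) ^ (m + 1 - 1) with hK
  have hKval : K = ((m : ℤ)) ^ m := by rw [hK, Nat.add_sub_cancel]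
  have hNn : ((m : ℤ) + 1) = ((m + 1 : ℕ) : ℤ) := by push_cast; ring
  have ha2 : 1 ≤ a₂ := by omega
  have hn2 : (2 : ℤ) ≤ (m : ℤ) + 1 := by exact_mod_cast by omega
  -- (n-1) * a₂ ≥ n * b₂
  have hA : ((m + 1 : ℕ) : ℤ) * b₂ ≤ (m : ℤ) * a₂ := by
    have hnb : 1 ≤ (m : ℤ) * b₂ := by
      have : (1:ℤ) ≤ (m:ℤ) := by exact_mod_cast hm
      nlinarith
    have hma : (m : ℤ) * a₂ ≥ a₂ := by nlinarith [sub_nonneg.mpr (show (1:ℤ) ≤ (m:ℤ) from by exact_mod_cast hm)]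
    push_cast
    nlinarith
  -- lower bound on K * (a₁^n - a₂^n)
  have step1 : ((m:ℤ) + 1) * a₂ ^ m * (a₁ - a₂) ≤ a₁ ^ (m + 1) - a₂ ^ (m + 1) :=
    pow_lin_lb m a₁ a₂ (by omega) hlt.le
  have step2 : ((m:ℤ) + 1) * a₂ ^ m ≤ ((m:ℤ) + 1) * a₂ ^ m * (a₁ - a₂) := by
    have hpos : (0:ℤ) ≤ ((m:ℤ) + 1) * a₂ ^ m := by positivity
    nlinarith [hpos]
  have hKpos : (0:ℤ) < K := by rw [hKval]; positivity
  have step3 : K * (((m:ℤ) + 1) * a₂ ^ m) ≤ K * (a₁ ^ (m+1) - a₂ ^ (m+1)) :=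
    mul_le_mul_of_nonneg_left (step2.trans step1) hKpos.le
  have step4 : ((m:ℤ)+1) * (((m:ℤ)) * a₂) ^ m = K * (((m:ℤ) + 1) * a₂ ^ m) := by
    rw [hKval, mul_pow]; ring
  have step5 : ((m:ℤ)+1) * (((m + 1 : ℕ) : ℤ) * b₂) ^ m ≤ ((m:ℤ)+1) * (((m:ℤ)) * a₂) ^ m := by
    have : (0:ℤ) ≤ ((m + 1 : ℕ) : ℤ) * b₂ := by positivity
    have hp := pow_le_pow_left₀ this hA m
    nlinarith [hp]
  have step6 : ((m + 1 : ℕ):ℤ) ^ (m+1) * b₂ ^ m = ((m:ℤ)+1) * (((m + 1 : ℕ) : ℤ) * b₂) ^ m := by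
    rw [mul_pow, ← hNn]; ring
  -- upper bound on RHS
  have hb1 : (1:ℤ) ≤ b₁ ^ m := by
    calc (1:ℤ) = 1 ^ m := (one_pow m).symm
      _ ≤ b₁ ^ m := pow_le_pow_left₀ one_pos.le h3 m
  have chain : ((m + 1 : ℕ):ℤ) ^ (m+1) * b₂ ^ m ≤ K * (a₁ ^ (m+1) - a₂ ^ (m+1)) := by
    calc ((m + 1 : ℕ):ℤ) ^ (m+1) * b₂ ^ m = ((m:ℤ)+1) * (((m + 1 : ℕ) : ℤ) * b₂) ^ m := step6
      _ ≤ ((m:ℤ)+1) * (((m:ℤ)) * a₂) ^ m := step5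
      _ = K * (((m:ℤ) + 1) * a₂ ^ m) := step4
      _ ≤ _ := step3
  simp only [Nat.add_sub_cancel] at heq
  have hN : (0:ℤ) < ((m + 1 : ℕ):ℤ) ^ (m+1) := by positivity
  have hNb : ((m + 1 : ℕ):ℤ) ^ (m+1) * 1 ≤ ((m + 1 : ℕ):ℤ) ^ (m+1) * b₁ ^ m :=
    mul_le_mul_of_nonneg_left hb1 hN.le
  nlinarith [chain, hNb, hN, heq]
lemma trin_coeff_abs (a b : ℤ) {n : ℕ} (hn : 2 ≤ n) (H : ℤ) (hH : 1 ≤ H)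
    (ha : |a| ≤ H) (hb : |b| ≤ H) :
    ∀ i, |(X ^ n + C a * X - C b : ℤ[X]).coeff i| ≤ H := by
  intro i
  simp only [coeff_sub, coeff_add, coeff_X_pow, coeff_C_mul, coeff_X, coeff_C, mul_ite,
    mul_one, mul_zero]
  rcases Nat.lt_or_ge i 2 with h | h
  · interval_cases i
    · rw [if_neg (show ¬ (0:ℕ) = n by omega), if_neg (show ¬ (1:ℕ) = 0 by omega),
        if_pos rfl]
      simpa using hb
    · rw [if_neg (show ¬ (1:ℕ) = n by omega), if_pos rfl,
        if_neg (show ¬ (1:ℕ) = 0 by omega)]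
      simpa using ha
  · rw [if_neg (show ¬ (1:ℕ) = i by omega), if_neg (show ¬ i = 0 by omega)]
    by_cases hin : i = n
    · rw [if_pos hin]
      simpa using hH
    · rw [if_neg hin]
      simp
      omega

lemma bounded_poly_finite (n : ℕ) (H : ℤ) :
    {f : ℤ[X] | f.natDegree ≤ n ∧ ∀ i, |f.coeff i| ≤ H}.Finite := by
  set e : ℤ[X] → (Fin (n+1) → ℤ) := fun f i => f.coeff i with he
  apply Set.Finite.of_finite_image (f := e)
  · apply Set.Finite.subset (Set.Finite.pi (fun _ : Fin (n+1) => Set.finite_Icc (-H) H))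
    rintro v ⟨f, ⟨hdeg, hcoeff⟩, rfl⟩
    intro i _
    exact Set.mem_Icc.mpr (abs_le.mp (hcoeff i))
  · rintro f ⟨hdf, _⟩ g ⟨hdg, _⟩ hfg
    ext i
    rcases Nat.lt_or_ge i (n+1) with h | h
    · exact congrFun hfg ⟨i, h⟩
    · rw [coeff_eq_zero_of_natDegree_lt (by omega), coeff_eq_zero_of_natDegree_lt (by omega)]

lemma inj_all (n : ℕ) (hn : 2 ≤ n) (H : ℕ) (hH : 2 ≤ H) (a₁ b₁ a₂ b₂ : ℤ)
    (hyp1 : (H : ℤ) ≤ 2 * a₁ ∧ a₁ ≤ (H : ℤ) ∧ 1 ≤ b₁ ∧ 3 * (n : ℤ) * b₁ ≤ (H : ℤ) ∧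
      a₁ % 2 = 0 ∧ b₁ % 4 = 2)
    (hyp2 : (H : ℤ) ≤ 2 * a₂ ∧ a₂ ≤ (H : ℤ) ∧ 1 ≤ b₂ ∧ 3 * (n : ℤ) * b₂ ≤ (H : ℤ) ∧
      a₂ % 2 = 0 ∧ b₂ % 4 = 2)
    (heq : ((n - 1 : ℕ) : ℤ) ^ (n - 1) * a₁ ^ n + (n : ℤ) ^ n * b₁ ^ (n - 1) =
      ((n - 1 : ℕ) : ℤ) ^ (n - 1) * a₂ ^ n + (n : ℤ) ^ n * b₂ ^ (n - 1)) :
    a₁ = a₂ ∧ b₁ = b₂ := by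
  obtain ⟨h1, h2, h3, h4, -, -⟩ := hyp1
  obtain ⟨g1, g2, g3, g4, -, -⟩ := hyp2
  have haa : a₁ = a₂ := by
    rcases lt_trichotomy a₁ a₂ with h | h | h
    · exact (no_gt n hn H hH a₂ b₂ a₁ b₁ g1 g2 g3 g4 h1 h2 h3 h4 h heq.symm).elim
    · exact h
    · exact (no_gt n hn H hH a₁ b₁ a₂ b₂ h1 h2 h3 h4 g1 g2 g3 g4 h heq).elim
  subst haa
  refine ⟨rfl, ?_⟩
  have hNne : ((n : ℤ) ^ n) ≠ 0 := by positivity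
  have hpow : b₁ ^ (n - 1) = b₂ ^ (n - 1) := mul_left_cancel₀ hNne (by linarith)
  rcases lt_trichotomy b₁ b₂ with h | h | h
  · exact ((pow_lt_pow_left₀ h (by linarith) (by omega : n - 1 ≠ 0)).ne hpow).elim
  · exact h
  · exact ((pow_lt_pow_left₀ h (by linarith) (by omega : n - 1 ≠ 0)).ne hpow.symm).elim


theorem many_distinct_discriminants (n : ℕ) (hn : 2 ≤ n) :
    (∀ H : ℕ, 2 ≤ H → ∀ a b : ℤ,
        (H : ℤ) ≤ 2 * a → a ≤ (H : ℤ) → 1 ≤ b → 3 * (n : ℤ) * b ≤ (H : ℤ) →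
        a % 2 = 0 → b % 4 = 2 →
        Irreducible (Polynomial.X ^ n + Polynomial.C (a : ℚ) * Polynomial.X -
          Polynomial.C (b : ℚ))) ∧
    (∃ H0 : ℕ, ∀ H : ℕ, H0 ≤ H → ∀ a₁ b₁ a₂ b₂ : ℤ,
        ((H : ℤ) ≤ 2 * a₁ ∧ a₁ ≤ (H : ℤ) ∧ 1 ≤ b₁ ∧ 3 * (n : ℤ) * b₁ ≤ (H : ℤ) ∧
          a₁ % 2 = 0 ∧ b₁ % 4 = 2) →
        ((H : ℤ) ≤ 2 * a₂ ∧ a₂ ≤ (H : ℤ) ∧ 1 ≤ b₂ ∧ 3 * (n : ℤ) * b₂ ≤ (H : ℤ) ∧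
          a₂ % 2 = 0 ∧ b₂ % 4 = 2) →
        ((n - 1 : ℕ) : ℤ) ^ (n - 1) * a₁ ^ n + (n : ℤ) ^ n * b₁ ^ (n - 1) =
          ((n - 1 : ℕ) : ℤ) ^ (n - 1) * a₂ ^ n + (n : ℤ) ^ n * b₂ ^ (n - 1) →
        a₁ = a₂ ∧ b₁ = b₂) ∧
    (∃ c : ℝ, 0 < c ∧ ∃ H0 : ℕ, ∀ H : ℕ, H0 ≤ H →
        c * (H : ℝ) ^ 2 ≤
          (Set.ncard {d : ℚ | ∃ f : Polynomial ℤ, f.Monic ∧ f.natDegree = n ∧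
            Irreducible (f.map (Int.castRingHom ℚ)) ∧ (∀ i, |f.coeff i| ≤ (H : ℤ)) ∧
            polyDisc (f.map (Int.castRingHom ℚ)) = d} : ℝ)) := by
  refine ⟨?_, ⟨2, fun H hH a₁ b₁ a₂ b₂ hyp1 hyp2 heq => inj_all n hn H hH a₁ b₁ a₂ b₂ hyp1 hyp2 heq⟩, ?_⟩
  · intro H hH a b _ _ _ _ ha hb
    exact trin_irred_rat a b hn ha hb
  · refine ⟨1 / (384 * (n : ℝ)), by positivity, 48 * n, fun H hH => ?_⟩
    have hH96 : 96 ≤ H := by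
      have : 48 * 2 ≤ 48 * n := Nat.mul_le_mul_left 48 hn
      omega
    have hnpos : 0 < 24 * n := by omega
    set m : ℕ := H / 4 with hm
    set T : ℕ := H / (24 * n) with hT
    set S : Set ℚ := {d : ℚ | ∃ f : Polynomial ℤ, f.Monic ∧ f.natDegree = n ∧
            Irreducible (f.map (Int.castRingHom ℚ)) ∧ (∀ i, |f.coeff i| ≤ (H : ℤ)) ∧
            polyDisc (f.map (Int.castRingHom ℚ)) = d} with hS
    set A : ℕ → ℤ := fun s => ((2 * (H / 4 + 1 + s) : ℕ) : ℤ) with hA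
    set B : ℕ → ℤ := fun t => ((4 * t + 2 : ℕ) : ℤ) with hB
    -- validity of the parameters
    have hvalid : ∀ s < m, ∀ t < T,
        (H : ℤ) ≤ 2 * A s ∧ A s ≤ (H : ℤ) ∧ 1 ≤ B t ∧ 3 * (n : ℤ) * B t ≤ (H : ℤ) ∧
          A s % 2 = 0 ∧ B t % 4 = 2 := by
      intro s hs t ht
      have h24 : 24 * n * (t + 1) ≤ H := by
        calc 24 * n * (t + 1) = (t + 1) * (24 * n) := by ring
          _ ≤ H := (Nat.le_div_iff_mul_le hnpos).mp (by omega : t + 1 ≤ H / (24 * n))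
      have hb2 : 3 * n * (4 * t + 2) ≤ H := by
        calc 3 * n * (4 * t + 2) = 12 * n * t + 6 * n := by ring
          _ ≤ 24 * n * t + 24 * n := by
              refine Nat.add_le_add (Nat.mul_le_mul_right t (by omega)) (by omega)
          _ = 24 * n * (t + 1) := by ring
          _ ≤ H := h24
      refine ⟨?_, ?_, ?_, ?_, ?_, ?_⟩
      · simp only [hA]
        have hnat : H ≤ 2 * (2 * (H / 4 + 1 + s)) := by omega
        exact_mod_cast Nat.cast_le.mpr hnat
      · simp only [hA]
        have : 2 * (H / 4 + 1 + s) ≤ H := by omega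
        exact_mod_cast Nat.cast_le.mpr this
      · simp only [hB]; push_cast; omega
      · simp only [hB]
        calc 3 * (n : ℤ) * ((4 * t + 2 : ℕ) : ℤ) = ((3 * n * (4 * t + 2) : ℕ) : ℤ) := by
              push_cast; ring
          _ ≤ (H : ℤ) := by exact_mod_cast Nat.cast_le.mpr hb2
      · simp only [hA]; push_cast; omega
      · simp only [hB]; push_cast; omega
    -- the discriminant value function
    set g : ℕ × ℕ → ℚ := fun p =>
      polyDisc (X ^ n + C ((A p.1 : ℤ) : ℚ) * X - C ((B p.2 : ℤ) : ℚ)) with hg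
    have hANe : ∀ s, (A s : ℚ) ≠ 0 := by
      intro s; simp only [hA]
      exact_mod_cast (show 2 * (H / 4 + 1 + s) ≠ 0 by omega)
    have hBNe : ∀ t, (B t : ℚ) ≠ 0 := by
      intro t; simp only [hB]
      exact_mod_cast (show 4 * t + 2 ≠ 0 by omega)
    have hgval : ∀ p : ℕ × ℕ, g p =
        (-1 : ℚ) ^ (n * (n - 1) / 2 + (n + 1)) *
          ((((n - 1 : ℕ) : ℤ) ^ (n - 1) * (A p.1) ^ n + (n : ℤ) ^ n * (B p.2) ^ (n - 1) : ℤ) : ℚ) := by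
      intro p
      simp only [hg]
      rw [trin_polyDisc _ _ (hANe p.1) (hBNe p.2) hn]
      push_cast
      ring
    -- injectivity
    have hinj : Set.InjOn g ↑(Finset.range m ×ˢ Finset.range T) := by
      rintro ⟨s₁, t₁⟩ hp₁ ⟨s₂, t₂⟩ hp₂ hgeq
      simp only [Finset.coe_product, Set.mem_prod, Finset.mem_coe, Finset.mem_range] at hp₁ hp₂
      rw [hgval, hgval] at hgeq
      have hsne : ((-1 : ℚ) ^ (n * (n - 1) / 2 + (n + 1))) ≠ 0 := by
        exact pow_ne_zero _ (by norm_num)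
      have hDeq : (((n - 1 : ℕ) : ℤ) ^ (n - 1) * (A s₁) ^ n + (n : ℤ) ^ n * (B t₁) ^ (n - 1)) =
          (((n - 1 : ℕ) : ℤ) ^ (n - 1) * (A s₂) ^ n + (n : ℤ) ^ n * (B t₂) ^ (n - 1)) := by
        exact_mod_cast mul_left_cancel₀ hsne hgeq
      obtain ⟨hA12, hB12⟩ := inj_all n hn H (by omega) (A s₁) (B t₁) (A s₂) (B t₂)
        (hvalid s₁ hp₁.1 t₁ hp₁.2) (hvalid s₂ hp₂.1 t₂ hp₂.2) hDeq
      have : s₁ = s₂ := by simp only [hA] at hA12; push_cast at hA12; omega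
      have : t₁ = t₂ := by simp only [hB] at hB12; push_cast at hB12; omega
      simp_all
    -- membership
    have hmem : ∀ p ∈ Finset.range m ×ˢ Finset.range T, g p ∈ S := by
      rintro ⟨s, t⟩ hp
      simp only [Finset.mem_product, Finset.mem_range] at hp
      obtain ⟨v1, v2, v3, v4, v5, v6⟩ := hvalid s hp.1 t hp.2
      refine ⟨X ^ n + C (A s) * X - C (B t), trin_monic _ _ hn, trin_natDegree _ _ hn, ?_, ?_, ?_⟩
      · rw [trin_map]
        simpa using trin_irred_rat (A s) (B t) hn v5 v6
      · have hHnn : (0 : ℤ) ≤ (H : ℤ) := Int.natCast_nonneg H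
        have hBle : B t ≤ (H : ℤ) := by
          have h1 : (1 : ℤ) ≤ 3 * (n : ℤ) := by
            have : (2 : ℤ) ≤ (n : ℤ) := by exact_mod_cast hn
            linarith
          have h2 : B t ≤ 3 * (n : ℤ) * B t := le_mul_of_one_le_left (by linarith) h1
          linarith
        apply trin_coeff_abs _ _ hn _ (by omega)
        · rw [abs_of_nonneg (by linarith)]; exact v2
        · rw [abs_of_nonneg (by linarith)]; exact hBle
      · rw [trin_map]
        simp only [hg]
        simp
    -- cardinality chain
    have hSfin : S.Finite := by
      apply Set.Finite.subset
        (Set.Finite.image (fun f : ℤ[X] => polyDisc (f.map (Int.castRingHom ℚ)))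
          (bounded_poly_finite n (H : ℤ)))
      rintro d ⟨f, hf1, hf2, _, hf4, hf5⟩
      exact ⟨f, ⟨hf2.le, hf4⟩, hf5⟩
    have hsub : ↑((Finset.range m ×ˢ Finset.range T).image g) ⊆ S := by
      intro d hd
      simp only [Finset.coe_image, Set.mem_image, Finset.mem_coe] at hd
      obtain ⟨p, hp, rfl⟩ := hd
      exact hmem p hp
    have hcard : ((Finset.range m ×ˢ Finset.range T).image g).card = m * T := by
      rw [Finset.card_image_of_injOn hinj, Finset.card_product, Finset.card_range,
        Finset.card_range]
    have hmain : m * T ≤ S.ncard := by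
      have := Set.ncard_le_ncard hsub hSfin
      rwa [Set.ncard_coe_finset, hcard] at this
    -- numerics
    have h8m : (H : ℝ) ≤ 8 * m := by
      have : H ≤ 8 * m := by simp only [hm]; omega
      exact_mod_cast Nat.cast_le.mpr this
    have h48T : (H : ℝ) ≤ 48 * n * T := by
      have hdm := Nat.div_add_mod H (24 * n)
      have hml := Nat.mod_lt H hnpos
      have h1 : 24 * n * T + H % (24 * n) = H := hdm
      have h2 : H % (24 * n) < 24 * n := hml
      have h3 : 24 * n ≤ H / 2 := by omega
      have h4 : H ≤ 48 * n * T := by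
        have e1 : 48 * n * T = 2 * (24 * n * T) := by ring
        rw [e1]
        omega
      exact_mod_cast Nat.cast_le.mpr h4
    have hHpos : (0 : ℝ) < H := by
      have : 0 < H := by omega
      exact_mod_cast Nat.cast_pos.mpr this
    have hkey : (H : ℝ) ^ 2 ≤ 384 * n * (m * T) := by
      have hmn : (0 : ℝ) ≤ (m : ℝ) := Nat.cast_nonneg m
      have := mul_le_mul h8m h48T hHpos.le (by positivity)
      calc (H : ℝ) ^ 2 = (H : ℝ) * (H : ℝ) := sq (H : ℝ) ▸ by ring
        _ ≤ (8 * m) * (48 * n * T) := this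
        _ = 384 * n * (m * T) := by ring
    have hnR : (0 : ℝ) < 384 * (n : ℝ) := by positivity
    rw [div_mul_eq_mul_div, one_mul, div_le_iff₀ hnR]
    calc (H : ℝ) ^ 2 ≤ 384 * n * (m * T) := hkey
      _ = (m * T : ℕ) * (384 * (n:ℝ)) := by push_cast; ring
      _ ≤ (S.ncard : ℝ) * (384 * (n:ℝ)) := by
          have : ((m * T : ℕ) : ℝ) ≤ (S.ncard : ℝ) := Nat.cast_le.mpr hmain
          exact mul_le_mul_of_nonneg_right this hnR.le
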